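/- Let N ≥ 2, let t_1⋯t_p be an admissible block, and let (θ_i) be the generalized Thue–Morse sequence generated by t_1⋯t_p^+. For ℓ = ip + q with i ≥ 0 and 1 ≤ q ≤ p, one has θ_ℓ = t_q + τ_i(t̄_q − t_q) if 1 ≤ q < p, and θ_ℓ = t_p + τ_i(t̄_p − t_p) + (τ_{i+1} − τ_i) if q = p, where (τ_i)_{i≥0} is the classical Thue–Morse sequence (τ_i = parity of the number of 1's in the binary expansion of i) and c̄ = N−1−c. -/

import Mathlib

/-- Reflection of a block: each digit `c` becomes `N - 1 - c`. -/
def reflB (N : ℕ) (w : List ℕ) : List ℕ := w.map (fun c => N - 1 - c)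

/-- The block `w` with its last digit incremented by one. -/
def plusB (w : List ℕ) : List ℕ := w.dropLast ++ [w.getLast! + 1]

/-- The `i`-th cyclic rotation of the block `w` (0-indexed). -/
def rotB (w : List ℕ) (i : ℕ) : List ℕ := w.drop i ++ w.take i

/-- The lexicographic inequalities defining admissibility of a block. -/
def AdmissibleIneq (N : ℕ) (w : List ℕ) : Prop :=
  ∀ i < w.length,
    reflB N w ≤ rotB w i ∧ plusB (w.drop i) ++ reflB N (w.take i) ≤ plusB w

/-- An admissible block in `{0, …, N-1}`. -/
def Admissible (N : ℕ) (w : List ℕ) : Prop :=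
  w ≠ [] ∧ (∀ c ∈ w, c < N) ∧ w.getLast! < N - 1 ∧ AdmissibleIneq N w

/-- Prefixes of the generalized Thue–Morse sequence generated by `plusB w`:
`gtmBlock N w n` is the prefix `θ_1 ⋯ θ_{2^n p}`. -/
def gtmBlock (N : ℕ) (w : List ℕ) : ℕ → List ℕ
  | 0 => plusB w
  | n + 1 => gtmBlock N w n ++ plusB (reflB N (gtmBlock N w n))

/-- The generalized Thue–Morse sequence generated by `plusB w`, 0-indexed:
`gtm N w n = θ_{n+1}`. -/
def gtm (N : ℕ) (w : List ℕ) : ℕ → ℕ := fun n => (gtmBlock N w n).getD n 0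

/-- Strict lexicographic order on infinite sequences of digits. -/
def seqLt (a b : ℕ → ℕ) : Prop := ∃ n, (∀ k < n, a k = b k) ∧ a n < b n

/-- Lexicographic order on infinite sequences of digits. -/
def seqLe (a b : ℕ → ℕ) : Prop := seqLt a b ∨ a = b

/-- Shift of a sequence by `k` places. -/
def shift (a : ℕ → ℕ) (k : ℕ) : ℕ → ℕ := fun n => a (n + k)

/-- The periodic sequence `w^∞` obtained by repeating the block `w`. -/
def per (w : List ℕ) : ℕ → ℕ := fun n => w.getD (n % w.length) 0

/-- Reflection of an infinite sequence. -/
def reflSeq (N : ℕ) (a : ℕ → ℕ) : ℕ → ℕ := fun n => N - 1 - a n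

/-- The classical Thue–Morse sequence: parity of the binary digit sum. -/
def tm (i : ℕ) : ℕ := (Nat.digits 2 i).sum % 2

/-- Number of length-`n` words appearing in sequences of `Z`. -/
noncomputable def wordCount (Z : Set (ℕ → ℕ)) (n : ℕ) : ℕ :=
  Set.ncard { u : List ℕ | u.length = n ∧ ∃ d ∈ Z, ∀ k < n, u.getD k 0 = d k }

/-- `Z` has topological entropy `h`. -/
def hasEntropy (Z : Set (ℕ → ℕ)) (h : ℝ) : Prop :=
  Filter.Tendsto (fun n : ℕ => Real.log (wordCount Z n) / n) Filter.atTop (nhds h)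


section Aux

lemma sum_digits_two (i : ℕ) :
    (Nat.digits 2 i).sum = i % 2 + (Nat.digits 2 (i / 2)).sum := by
  rcases Nat.eq_zero_or_pos i with h | h
  · simp [h]
  · rw [Nat.digits_def' (by norm_num : 1 < 2) h]; simp

lemma sum_digits_pow_add : ∀ n : ℕ, ∀ i < 2^n,
    (Nat.digits 2 (2^n + i)).sum = (Nat.digits 2 i).sum + 1 := by
  intro n
  induction n with
  | zero => intro i hi; interval_cases i; simp
  | succ n ih =>
    intro i hi
    have e : 2^(n+1) + i = 2*(2^n + i/2) + i % 2 := by rw [pow_succ]; omega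
    rw [e, sum_digits_two]
    have h1 : (2*(2^n + i/2) + i % 2) % 2 = i % 2 := by omega
    have h2 : (2*(2^n + i/2) + i % 2) / 2 = 2^n + i/2 := by omega
    have hi2 : i / 2 < 2^n := by rw [pow_succ] at hi; omega
    rw [h1, h2, ih (i/2) hi2, sum_digits_two i]
    omega

lemma tm_le_one (i : ℕ) : tm i ≤ 1 := by unfold tm; omega

lemma tm_pow_add (n i : ℕ) (h : i < 2^n) : tm (2^n + i) = 1 - tm i := by
  unfold tm; rw [sum_digits_pow_add n i h]; omega

lemma tm_zero : tm 0 = 0 := by simp [tm]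

lemma tm_one : tm 1 = 1 := by simp [tm]

lemma getLast!_eq_getD (l : List ℕ) (h : l ≠ []) :
    l.getLast! = l.getD (l.length - 1) 0 := by
  have hl : 0 < l.length := List.length_pos_iff.mpr h
  rw [List.getLast!_eq_getElem!, List.getD_eq_getElem l 0 (by omega),
    List.getElem!_of_getElem? (List.getElem?_eq_getElem (by omega))]

lemma getD_append_lt (l l' : List ℕ) (j : ℕ) (h : j < l.length) :
    (l ++ l').getD j 0 = l.getD j 0 :=
  List.getD_append _ _ _ _ h

lemma getD_append_ge (l l' : List ℕ) (j : ℕ) :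
    (l ++ l').getD (l.length + j) 0 = l'.getD j 0 := by
  rw [List.getD_append_right _ _ _ _ (by omega)]
  simp

lemma plusB_length (l : List ℕ) (h : l ≠ []) : (plusB l).length = l.length := by
  have hl : 0 < l.length := List.length_pos_iff.mpr h
  simp [plusB]
  omega

lemma reflB_length (N : ℕ) (l : List ℕ) : (reflB N l).length = l.length := by
  simp [reflB]

lemma getD_reflB (N : ℕ) (l : List ℕ) (j : ℕ) (h : j < l.length) :
    (reflB N l).getD j 0 = N - 1 - l.getD j 0 := by
  rw [List.getD_eq_getElem _ 0 (by simpa [reflB_length]), List.getD_eq_getElem _ 0 h]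
  simp [reflB]

lemma getD_plusB (l : List ℕ) (h : l ≠ []) (j : ℕ) (hj : j < l.length) :
    (plusB l).getD j 0 = if j + 1 = l.length then l.getD j 0 + 1 else l.getD j 0 := by
  have hl : 0 < l.length := List.length_pos_iff.mpr h
  have hdl : l.dropLast.length = l.length - 1 := List.length_dropLast (xs := l)
  unfold plusB
  by_cases hc : j + 1 = l.length
  · rw [if_pos hc]
    have hj' : j = l.dropLast.length + 0 := by omega
    rw [hj', getD_append_ge]
    simp only [List.getD_cons_zero]
    rw [getLast!_eq_getD l h]
    congr 2
    omega
  · rw [if_neg hc, getD_append_lt _ _ _ (by omega),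
      List.getD_eq_getElem _ 0 (by omega), List.getD_eq_getElem _ 0 hj,
      List.getElem_dropLast]

end Aux
/-- Explicit formula candidate for the generalized Thue–Morse sequence. -/
def gtmF (N : ℕ) (w : List ℕ) (ℓ : ℕ) : ℕ :=
  if ℓ % w.length + 1 = w.length then
    (if tm (ℓ / w.length) = 0 then w.getD (ℓ % w.length) 0
      else N - 2 - w.getD (ℓ % w.length) 0) + tm (ℓ / w.length + 1)
  else
    if tm (ℓ / w.length) = 0 then w.getD (ℓ % w.length) 0
    else N - 1 - w.getD (ℓ % w.length) 0

lemma gtmBlock_length (N : ℕ) (w : List ℕ) (h : w ≠ []) :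
    ∀ n, (gtmBlock N w n).length = 2^n * w.length := by
  intro n
  induction n with
  | zero => simp [gtmBlock, plusB_length w h]
  | succ n ih =>
    have hne : reflB N (gtmBlock N w n) ≠ [] := by
      apply List.ne_nil_of_length_pos
      rw [reflB_length, ih]
      have : 0 < w.length := List.length_pos_iff.mpr h
      positivity
    simp only [gtmBlock, List.length_append, ih, plusB_length _ hne, reflB_length]
    rw [pow_succ]
    ring

lemma gtmBlock_getD (N : ℕ) (w : List ℕ) (hN : 2 ≤ N) (hne : w ≠ [])
    (hlt : ∀ c ∈ w, c < N) (hlast : w.getLast! < N - 1) :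
    ∀ n, ∀ j < 2^n * w.length, (gtmBlock N w n).getD j 0 = gtmF N w j := by
  have hp : 0 < w.length := List.length_pos_iff.mpr hne
  set p := w.length with hpdef
  have hbound : ∀ r < p, w.getD r 0 < N := by
    intro r hr
    rw [List.getD_eq_getElem _ 0 hr]
    exact hlt _ (List.getElem_mem hr)
  have hlast' : w.getD (p - 1) 0 < N - 1 := by
    rw [← getLast!_eq_getD w hne]; exact hlast
  intro n
  induction n with
  | zero =>
    intro j hj
    rw [pow_zero, one_mul] at hj
    show (plusB w).getD j 0 = _
    rw [getD_plusB w hne j hj]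
    unfold gtmF
    rw [Nat.mod_eq_of_lt hj, Nat.div_eq_of_lt hj, tm_zero, tm_one]
    by_cases hc : j + 1 = p
    · rw [if_pos hc, if_pos hc]; simp
    · rw [if_neg hc, if_neg hc]; simp
  | succ n ih =>
    intro j hj
    have hlenB : (gtmBlock N w n).length = 2^n * p := gtmBlock_length N w hne n
    have hM : 0 < 2^n * p := by positivity
    rw [show (2:ℕ)^(n+1) * p = 2^n * p + 2^n * p by rw [pow_succ]; ring] at hj
    show (gtmBlock N w n ++ plusB (reflB N (gtmBlock N w n))).getD j 0 = _
    by_cases hcase : j < 2^n * p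
    · rw [getD_append_lt _ _ _ (by omega), ih j hcase]
    · -- second half
      set k := j - 2^n * p with hkdef
      have hk : k < 2^n * p := by omega
      have hjk : j = (gtmBlock N w n).length + k := by omega
      have hrefl_ne : reflB N (gtmBlock N w n) ≠ [] :=
        List.ne_nil_of_length_pos (by rw [reflB_length]; omega)
      have hrefl_len : (reflB N (gtmBlock N w n)).length = 2^n * p := by
        rw [reflB_length]; exact hlenB
      rw [hjk, getD_append_ge, getD_plusB _ hrefl_ne k (by omega), hrefl_len,
        getD_reflB N _ k (by omega), ih k hk]
      -- now pure arithmetic on gtmF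
      have hidx : k / p < 2^n := (Nat.div_lt_iff_lt_mul hp).mpr (by omega)
      have hdm := Nat.div_add_mod k p
      have hr : k % p < p := Nat.mod_lt _ hp
      have hdiv : j / p = 2^n + k / p := by
        have hje : j = k + 2^n * p := by omega
        rw [hje, Nat.add_mul_div_right _ _ hp]; omega
      have hmod : j % p = k % p := by
        have hje : j = k + 2^n * p := by omega
        rw [hje, Nat.add_mul_mod_self_right]
      rw [← hjk]
      have htm1 : tm (2^n + k / p) = 1 - tm (k / p) := tm_pow_add n _ hidx
      have htm_le := tm_le_one (k / p)
      have ha := hbound (k % p) hr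
      unfold gtmF
      simp only [← hpdef]
      rw [hdiv, hmod, htm1]
      by_cases hlastk : k + 1 = 2^n * p
      · -- k is the last index of the first half
        have hple : p ≤ 2^n * p := Nat.le_mul_of_pos_left p (by positivity)
        have h2 : (2^n - 1) * p = 2^n * p - p := by rw [Nat.sub_mul, one_mul]
        have hkeq : k = p * (2^n - 1) + (p - 1) := by rw [mul_comm p]; omega
        have hkd : k / p = 2^n - 1 := by
          rw [hkeq, Nat.mul_add_div hp, Nat.div_eq_of_lt (by omega)]; omega
        have hkm : k % p = p - 1 := by
          rw [hkeq, Nat.mul_add_mod, Nat.mod_eq_of_lt (by omega)]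
        have hcond : k % p + 1 = p := by omega
        have htm2 : tm (2^n + k / p + 1) = 1 := by
          have he : 2^n + k / p + 1 = 2^(n+1) + 0 := by rw [hkd, pow_succ]; omega
          rw [he, tm_pow_add (n+1) 0 (by positivity), tm_zero]
        have htm3 : tm (k / p + 1) = 1 := by
          have he : k / p + 1 = 2^n + 0 := by omega
          rw [he, tm_pow_add n 0 (by positivity), tm_zero]
        have ha' : w.getD (k % p) 0 < N - 1 := by rw [hkm]; exact hlast'
        rw [if_pos hlastk, if_pos hcond, if_pos hcond, htm2, htm3]
        split_ifs <;> omega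
      · -- k is not the last index
        rw [if_neg hlastk]
        by_cases hcond : k % p + 1 = p
        · -- last digit of a period block inside
          have hklt : k / p + 1 < 2^n := by
            have hkk : k + 1 = p * (k / p + 1) := by rw [Nat.mul_add, mul_one]; omega
            by_contra hcon
            have he : k / p + 1 = 2^n := by omega
            rw [he, mul_comm] at hkk
            omega
          have htm2 : tm (2^n + k / p + 1) = 1 - tm (k / p + 1) := by
            have he : 2^n + k / p + 1 = 2^n + (k / p + 1) := by omega
            rw [he, tm_pow_add n _ hklt]
          have htm_le2 := tm_le_one (k / p + 1)
          have ha' : w.getD (k % p) 0 < N - 1 := by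
            rw [show k % p = p - 1 by omega]; exact hlast'
          rw [if_pos hcond, if_pos hcond, htm2]
          split_ifs <;> omega
        · rw [if_neg hcond, if_neg hcond]
          split_ifs <;> omega

lemma gtm_eq_gtmF (N : ℕ) (w : List ℕ) (hN : 2 ≤ N) (hne : w ≠ [])
    (hlt : ∀ c ∈ w, c < N) (hlast : w.getLast! < N - 1) (n : ℕ) :
    gtm N w n = gtmF N w n := by
  have hp : 0 < w.length := List.length_pos_iff.mpr hne
  have hn : n < 2^n * w.length :=
    lt_of_lt_of_le (Nat.lt_two_pow_self (n := n)) (Nat.le_mul_of_pos_right _ hp)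
  exact gtmBlock_getD N w hN hne hlt hlast n n hn
/-- Lemma 4.6 — explicit formula for the generalized Thue–Morse
sequence in terms of the classical Thue–Morse sequence `tm`. -/
theorem stmt4 (N : ℕ) (hN : 2 ≤ N) (w : List ℕ) (hadm : Admissible N w) :
    ∀ i q : ℕ, 1 ≤ q → q ≤ w.length →
      (gtm N w (i * w.length + q - 1) : ℤ) =
        (w.getD (q - 1) 0 : ℤ) + (tm i : ℤ) * ((N : ℤ) - 1 - 2 * (w.getD (q - 1) 0 : ℤ))
          + (if q = w.length then (tm (i + 1) : ℤ) - (tm i : ℤ) else 0) := by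
  obtain ⟨hne, hlt, hlast, _⟩ := hadm
  intro i q hq1 hq2
  have hp : 0 < w.length := List.length_pos_iff.mpr hne
  have hq' : q - 1 < w.length := by omega
  rw [gtm_eq_gtmF N w hN hne hlt hlast]
  unfold gtmF
  have hℓ : i * w.length + q - 1 = (q - 1) + i * w.length := by omega
  have hdiv : (i * w.length + q - 1) / w.length = i := by
    rw [hℓ, Nat.add_mul_div_right _ _ hp, Nat.div_eq_of_lt hq', zero_add]
  have hmod : (i * w.length + q - 1) % w.length = q - 1 := by
    rw [hℓ, Nat.add_mul_mod_self_right, Nat.mod_eq_of_lt hq']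
  rw [hdiv, hmod]
  have ha : w.getD (q - 1) 0 < N := by
    rw [List.getD_eq_getElem _ 0 hq']
    exact hlt _ (List.getElem_mem hq')
  have h1 := tm_le_one i
  have h2 := tm_le_one (i + 1)
  by_cases hc : q = w.length
  · rw [if_pos (by omega), if_pos hc]
    have ha' : w.getD (q - 1) 0 < N - 1 := by
      rw [show q - 1 = w.length - 1 by omega, ← getLast!_eq_getD w hne]
      exact hlast
    rcases Nat.le_one_iff_eq_zero_or_eq_one.mp h1 with ht | ht <;>
      rw [ht] <;>
      simp only [reduceIte, if_neg Nat.one_ne_zero, Nat.cast_zero, Nat.cast_one, zero_mul, one_mul] <;>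
      omega
  · rw [if_neg (by omega), if_neg hc]
    rcases Nat.le_one_iff_eq_zero_or_eq_one.mp h1 with ht | ht <;>
      rw [ht] <;>
      simp only [reduceIte, if_neg Nat.one_ne_zero, Nat.cast_zero, Nat.cast_one, zero_mul, one_mul] <;>
      omega
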